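/- arXiv:2011.01013 — 3 statements merged into one kernel-verified Lean document; each statement's English description precedes it below -/
import Mathlib

section
/- Let y* > 0 and set ω₀ = 1/y*. Suppose ρ, ω are real-analytic functions on a neighborhood of z = 1 that solve the multiplied system there and satisfy ρ(1) = ω(1) = ω₀. Then the pair of first derivatives (ρ'(1), ω'(1)) satisfies: either ρ'(1) = −ω₀ or ω'(1) = 0; in the case ρ'(1) = −ω₀ one has ω'(1) = 1 − 2ω₀ or ω'(1) = −ω₀, and in the case ω'(1) = 0 one has ρ'(1) = 1 − 3ω₀. In particular (ρ'(1), ω'(1)) ∈ {(−ω₀, 1−2ω₀), (−ω₀, −ω₀), (1−3ω₀, 0)}. -/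
/-- The multiplied form of the rescaled self-similar isothermal Euler–Poisson system
with parameter `y = y*`, at the point `z`. -/
def MultSys (y : ℝ) (ρ ω : ℝ → ℝ) (z : ℝ) : Prop :=
  deriv ρ z * (1 - y ^ 2 * z ^ 2 * (ω z) ^ 2)
    + 2 * y ^ 2 * z * ω z * ρ z * (ρ z - ω z) = 0 ∧
  z * deriv ω z * (1 - y ^ 2 * z ^ 2 * (ω z) ^ 2)
    - (1 - 3 * ω z) * (1 - y ^ 2 * z ^ 2 * (ω z) ^ 2)
    - 2 * y ^ 2 * z ^ 2 * (ω z) ^ 2 * (ρ z - ω z) = 0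

/-- Classification of the possible first Taylor coefficients at the sonic point `z = 1`:
the Larson–Penston branch, the trivial branch, and the Hunter branch. -/
theorem first_order_coefficients_at_sonic_point
    (y : ℝ) (hy : 0 < y) (ω₀ : ℝ) (hω₀ : ω₀ = 1 / y)
    (ρ ω : ℝ → ℝ) (ε : ℝ) (hε : 0 < ε)
    (hρa : AnalyticOnNhd ℝ ρ (Metric.ball 1 ε))
    (hωa : AnalyticOnNhd ℝ ω (Metric.ball 1 ε))
    (hsol : ∀ z ∈ Metric.ball (1 : ℝ) ε, MultSys y ρ ω z)
    (hρ1 : ρ 1 = ω₀) (hω1 : ω 1 = ω₀) :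
    (deriv ρ 1 = -ω₀ ∨ deriv ω 1 = 0) ∧
    (deriv ρ 1 = -ω₀ → deriv ω 1 = 1 - 2 * ω₀ ∨ deriv ω 1 = -ω₀) ∧
    (deriv ω 1 = 0 → deriv ρ 1 = 1 - 3 * ω₀) ∧
    ((deriv ρ 1 = -ω₀ ∧ deriv ω 1 = 1 - 2 * ω₀) ∨
     (deriv ρ 1 = -ω₀ ∧ deriv ω 1 = -ω₀) ∨
     (deriv ρ 1 = 1 - 3 * ω₀ ∧ deriv ω 1 = 0)) := by
  have hmem : (1:ℝ) ∈ Metric.ball (1:ℝ) ε := by simpa using hε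
  have hyne : y ≠ 0 := ne_of_gt hy
  have hω₀ne : ω₀ ≠ 0 := by rw [hω₀]; positivity
  have hyω : y * ω₀ = 1 := by rw [hω₀]; field_simp
  set a := deriv ρ 1 with ha
  set b := deriv ω 1 with hb
  set c := deriv (deriv ρ) 1 with hc
  set d := deriv (deriv ω) 1 with hd
  have hρd : HasDerivAt ρ a 1 := (hρa 1 hmem).differentiableAt.hasDerivAt
  have hωd : HasDerivAt ω b 1 := (hωa 1 hmem).differentiableAt.hasDerivAt
  have hρ' : HasDerivAt (deriv ρ) c 1 := ((hρa.deriv) 1 hmem).differentiableAt.hasDerivAt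
  have hω' : HasDerivAt (deriv ω) d 1 := ((hωa.deriv) 1 hmem).differentiableAt.hasDerivAt
  have hz2 : HasDerivAt (fun z : ℝ => z^2) 2 1 := by simpa using hasDerivAt_pow 2 (1:ℝ)
  have hω2 : HasDerivAt (fun z => (ω z)^2) (2 * ω 1 * b) 1 := by simpa using hωd.fun_pow 2
  have hP : HasDerivAt (fun z : ℝ => 1 - y^2 * z^2 * (ω z)^2)
      (0 - (y ^ 2 * 2 * (ω 1)^2 + y^2*1^2 * (2 * ω 1 * b))) 1 :=
    (hasDerivAt_const (1:ℝ) (1:ℝ)).sub ((hz2.const_mul (y^2)).mul hω2)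
  have hy2 : y^2 = 1/ω₀^2 := by
    field_simp
    nlinarith [hyω]
  -- derivative of LHS of first equation
  have hF1 : HasDerivAt (fun z => deriv ρ z * (1 - y ^ 2 * z ^ 2 * (ω z) ^ 2)
      + 2 * y ^ 2 * z * ω z * ρ z * (ρ z - ω z)) (-(2/ω₀) * (b * (a + ω₀))) 1 := by
    have h := (hρ'.fun_mul hP).fun_add
      (((((hasDerivAt_id (1:ℝ)).const_mul (2*y^2)).fun_mul hωd).fun_mul hρd).fun_mul (hρd.fun_sub hωd))
    refine h.congr_deriv ?_
    simp only [hρ1, hω1, id_eq]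
    rw [hy2]
    field_simp
    ring
  -- derivative of LHS of second equation
  have hF2 : HasDerivAt (fun z => z * deriv ω z * (1 - y ^ 2 * z ^ 2 * (ω z) ^ 2)
      - (1 - 3 * ω z) * (1 - y ^ 2 * z ^ 2 * (ω z) ^ 2)
      - 2 * y ^ 2 * z ^ 2 * (ω z) ^ 2 * (ρ z - ω z))
      (-(2/ω₀) * ((b - 1 + 3*ω₀) * (ω₀ + b) + ω₀ * (a - b))) 1 := by
    have h := ((((hasDerivAt_id (1:ℝ)).fun_mul hω').fun_mul hP).fun_sub
        (((hasDerivAt_const (1:ℝ) (1:ℝ)).fun_sub (hωd.const_mul 3)).fun_mul hP)).fun_sub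
      (((hz2.const_mul (2*y^2)).fun_mul hω2).fun_mul (hρd.fun_sub hωd))
    refine h.congr_deriv ?_
    simp only [hρ1, hω1, id_eq]
    rw [hy2]
    field_simp
    ring
  have heq1 : (fun z => deriv ρ z * (1 - y ^ 2 * z ^ 2 * (ω z) ^ 2)
      + 2 * y ^ 2 * z * ω z * ρ z * (ρ z - ω z)) =ᶠ[nhds 1] fun _ => (0:ℝ) := by
    filter_upwards [Metric.isOpen_ball.mem_nhds hmem] with z hz using (hsol z hz).1
  have heq2 : (fun z => z * deriv ω z * (1 - y ^ 2 * z ^ 2 * (ω z) ^ 2)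
      - (1 - 3 * ω z) * (1 - y ^ 2 * z ^ 2 * (ω z) ^ 2)
      - 2 * y ^ 2 * z ^ 2 * (ω z) ^ 2 * (ρ z - ω z)) =ᶠ[nhds 1] fun _ => (0:ℝ) := by
    filter_upwards [Metric.isOpen_ball.mem_nhds hmem] with z hz using (hsol z hz).2
  have e1 : -(2/ω₀) * (b * (a + ω₀)) = 0 :=
    hF1.unique ((hasDerivAt_const (1:ℝ) (0:ℝ)).congr_of_eventuallyEq heq1)
  have e2 : -(2/ω₀) * ((b - 1 + 3*ω₀) * (ω₀ + b) + ω₀ * (a - b)) = 0 :=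
    hF2.unique ((hasDerivAt_const (1:ℝ) (0:ℝ)).congr_of_eventuallyEq heq2)
  have key1 : b * (a + ω₀) = 0 := by
    rcases mul_eq_zero.1 e1 with h | h
    · exfalso; apply hω₀ne; field_simp at h; simp at h
    · exact h
  have key2 : (b - 1 + 3*ω₀) * (ω₀ + b) + ω₀ * (a - b) = 0 := by
    rcases mul_eq_zero.1 e2 with h | h
    · exfalso; apply hω₀ne; field_simp at h; simp at h
    · exact h
  have hcase : b = 0 ∨ a = -ω₀ := by
    rcases mul_eq_zero.1 key1 with h | h
    · exact Or.inl h
    · exact Or.inr (by linarith)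
  have hHunter : b = 0 → a = 1 - 3*ω₀ := by
    intro hb0
    have h : ω₀ * (a - (1 - 3*ω₀)) = 0 := by
      rw [hb0] at key2; linear_combination key2
    rcases mul_eq_zero.1 h with h' | h'
    · exact absurd h' hω₀ne
    · linarith
  have hLP : a = -ω₀ → b = 1 - 2*ω₀ ∨ b = -ω₀ := by
    intro ha0
    have h : (ω₀ + b) * (b - (1 - 2*ω₀)) = 0 := by
      rw [ha0] at key2; linear_combination key2
    rcases mul_eq_zero.1 h with h' | h'
    · exact Or.inr (by linarith)
    · exact Or.inl (by linarith)
  refine ⟨?_, hLP, hHunter, ?_⟩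
  · rcases hcase with h | h
    · exact Or.inr h
    · exact Or.inl h
  · rcases hcase with h | h
    · exact Or.inr (Or.inr ⟨hHunter h, h⟩)
    · rcases hLP h with h' | h'
      · exact Or.inl ⟨h, h'⟩
      · exact Or.inr (Or.inl ⟨h, h'⟩)
end

section
/- Fix y* > 0, set ω₀ = 1/y*, and let N ≥ 2 be an integer. Define the 2×2 real matrix A_N^{LP} with entries a₁₁ = −2N + 2 − 2N(1−2ω₀)/ω₀, a₁₂ = −2(−ω₀)/ω₀ − 2 (which equals 0), a₂₁ = −2, a₂₂ = −2N − 4 + 2/ω₀ − (2N+2)(1−2ω₀)/ω₀. Then det A_N^{LP} = 4N·(1 − 1/ω₀)·(N(1 − 1/ω₀) + 1); the matrix A_N^{LP} is singular if and only if y* = 1 or y* = (N+1)/N; and consequently A_N^{LP} is invertible for every y* > 3/2 and every integer N ≥ 2. -/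
/-- Properties of the matrix `A_N^{LP}` appearing in the Taylor-coefficient recursion
for Larson–Penston-type solutions at the sonic point. -/
theorem lp_matrix_invertibility
    (y : ℝ) (hy : 0 < y) (N : ℕ) (hN : 2 ≤ N)
    (ω₀ : ℝ) (hω₀ : ω₀ = 1 / y)
    (A : Matrix (Fin 2) (Fin 2) ℝ)
    (hA : A = !![-2 * (N : ℝ) + 2 - 2 * (N : ℝ) * (1 - 2 * ω₀) / ω₀,
                 -2 * (-ω₀) / ω₀ - 2;
                 -2,
                 -2 * (N : ℝ) - 4 + 2 / ω₀ - (2 * (N : ℝ) + 2) * (1 - 2 * ω₀) / ω₀]) :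
    A.det = 4 * (N : ℝ) * (1 - 1 / ω₀) * ((N : ℝ) * (1 - 1 / ω₀) + 1) ∧
    (A.det = 0 ↔ y = 1 ∨ y = ((N : ℝ) + 1) / (N : ℝ)) ∧
    (3 / 2 < y → IsUnit A) := by
  have hy0 : y ≠ 0 := ne_of_gt hy
  have hω : ω₀ ≠ 0 := by rw [hω₀]; positivity
  have hinv : 1 / ω₀ = y := by rw [hω₀]; field_simp
  have hN0 : (0:ℝ) < N := by positivity
  have hdet : A.det = 4 * (N : ℝ) * (1 - 1 / ω₀) * ((N : ℝ) * (1 - 1 / ω₀) + 1) := by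
    rw [hA, Matrix.det_fin_two_of]
    field_simp
    ring
  refine ⟨hdet, ?_, ?_⟩
  · rw [hdet, hinv]
    constructor
    · intro h
      rcases mul_eq_zero.mp h with h1 | h2
      · rcases mul_eq_zero.mp h1 with h3 | h4
        · exfalso; nlinarith
        · left; linarith
      · right
        field_simp
        linarith
    · rintro (rfl | h)
      · ring
      · have : (N:ℝ) * (1 - y) + 1 = 0 := by
          rw [h]; field_simp; ring
        rw [this]; ring
  · intro h32
    rw [Matrix.isUnit_iff_isUnit_det, isUnit_iff_ne_zero, hdet, hinv]
    have h1 : 1 - y < 0 := by linarith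
    have hc : (2:ℝ) ≤ N := by exact_mod_cast hN
    have hp : ((N:ℝ) - 2) * (y - 1) ≥ 0 := mul_nonneg (by linarith) (by linarith)
    have h2 : (N:ℝ) * (1 - y) + 1 < 0 := by nlinarith
    intro h
    rcases mul_eq_zero.mp h with h3 | h4
    · rcases mul_eq_zero.mp h3 with h5 | h6
      · nlinarith
      · linarith
    · linarith
end

section
/- Let y* ∈ [2,3] and let (ρ, ω) be real-analytic functions on (1−r, 1+r), r ∈ (0,1), solving the multiplied system there with the LP conditions. Then there exists δ ∈ (0, r) such that for every z ∈ (1, 1+δ): ρ'(z) < 0; ω'(z) > 0; 1/3 < ω(z) < 1; −2ρ(z)/z < ρ'(z) < −ρ(z)/z; ω(z) > 1/(y*·z); ρ(z) < 1/(y*·z); and ρ(z)·ω(z) > 1/(y*·z)². -/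
open Set Filter Topology

lemma hasDerivAt_fix {f : ℝ → ℝ} {a b x : ℝ} (h : HasDerivAt f a x) (e : a = b) :
    HasDerivAt f b x := e ▸ h

lemma ev_pos_right {g : ℝ → ℝ} {m : ℝ} (hg : HasDerivAt g m 1) (h0 : g 1 = 0) (hm : 0 < m) :
    ∀ᶠ z in 𝓝[>] (1:ℝ), 0 < g z := by
  have hs := hasDerivAt_iff_tendsto_slope.mp hg
  have h1 : ∀ᶠ z in 𝓝[≠] (1:ℝ), 0 < slope g 1 z := hs.eventually (eventually_gt_nhds hm)
  have h2 : ∀ᶠ z in 𝓝[>] (1:ℝ), 0 < slope g 1 z :=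
    h1.filter_mono (nhdsWithin_mono 1 (fun x hx => Set.mem_compl_singleton_iff.mpr (ne_of_gt hx)))
  filter_upwards [h2, eventually_mem_nhdsWithin] with z hz h1z
  have hz1 : (0:ℝ) < z - 1 := sub_pos.mpr h1z
  rw [slope_def_field, h0, sub_zero] at hz
  rcases div_pos_iff.mp hz with ⟨h,_⟩ | ⟨_,h⟩
  · exact h
  · linarith

lemma ev_neg_right {g : ℝ → ℝ} {m : ℝ} (hg : HasDerivAt g m 1) (h0 : g 1 = 0) (hm : m < 0) :
    ∀ᶠ z in 𝓝[>] (1:ℝ), g z < 0 := by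
  have := ev_pos_right (g := fun z => -g z) hg.neg (by simp [h0]) (by linarith)
  filter_upwards [this] with z hz; linarith

lemma ev_pos_cont {g : ℝ → ℝ} (hg : ContinuousAt g 1) (h0 : 0 < g 1) :
    ∀ᶠ z in 𝓝[>] (1:ℝ), 0 < g z :=
  (hg.eventually (eventually_gt_nhds h0) (p := fun t => 0 < t)).filter_mono nhdsWithin_le_nhds

lemma deriv_eq_zero_on {S : Set ℝ} (hS : IsOpen S) {F : ℝ → ℝ} (h : ∀ z ∈ S, F z = 0) :
    ∀ z ∈ S, deriv F z = 0 := by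
  intro z hz
  have he : F =ᶠ[nhds z] fun _ => (0:ℝ) := Filter.eventuallyEq_of_mem (hS.mem_nhds hz) h
  rw [he.deriv_eq, deriv_const]

section sys
variable {y : ℝ} {p q p1 q1 p2 q2 : ℝ → ℝ} {x a2 b2 a3 b3 : ℝ}

lemma hasDerivAt_A (hq : HasDerivAt q (q1 x) x) :
    HasDerivAt (fun z => 1 - y^2*z^2*(q z)^2)
      (-(y^2)*(2*x*(q x)^2 + 2*x^2*(q x)*(q1 x))) x := by
  have h := (((hasDerivAt_pow 2 x).const_mul (y^2)).mul (hq.pow 2)).const_sub 1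
  exact hasDerivAt_fix h (by simp only [Pi.mul_apply, Pi.pow_apply]; push_cast; ring)

lemma hasDerivAt_F (hp : HasDerivAt p (p1 x) x) (hq : HasDerivAt q (q1 x) x)
    (hp1 : HasDerivAt p1 a2 x) :
    HasDerivAt (fun z => p1 z * (1 - y^2*z^2*(q z)^2) + 2*y^2*z*q z*p z*(p z - q z))
      (a2 * (1 - y^2*x^2*(q x)^2)
        + p1 x * (-(y^2)*(2*x*(q x)^2 + 2*x^2*(q x)*(q1 x)))
        + 2*y^2*((q x*p x + x*q1 x*p x + x*q x*p1 x)*(p x - q x)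
            + x*q x*p x*(p1 x - q1 x))) x := by
  have h1 := hp1.mul (hasDerivAt_A (y := y) hq)
  have h2 := ((((hasDerivAt_id' (𝕜 := ℝ) x).const_mul (2*y^2)).mul hq).mul hp).mul (hp.sub hq)
  exact hasDerivAt_fix (h1.add h2) (by simp only [Pi.mul_apply, Pi.pow_apply, Pi.sub_apply, Pi.add_apply]; ring)

lemma hasDerivAt_G (hp : HasDerivAt p (p1 x) x) (hq : HasDerivAt q (q1 x) x)
    (hq1 : HasDerivAt q1 b2 x) :
    HasDerivAt (fun z => z * q1 z * (1 - y^2*z^2*(q z)^2)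
        - (1 - 3*q z) * (1 - y^2*z^2*(q z)^2) - 2*y^2*z^2*(q z)^2*(p z - q z))
      ((q1 x + x*b2) * (1 - y^2*x^2*(q x)^2)
        + x*q1 x*(-(y^2)*(2*x*(q x)^2 + 2*x^2*(q x)*(q1 x)))
        - ((-(3*q1 x))*(1 - y^2*x^2*(q x)^2)
            + (1 - 3*q x)*(-(y^2)*(2*x*(q x)^2 + 2*x^2*(q x)*(q1 x))))
        - 2*y^2*((2*x*(q x)^2 + 2*x^2*(q x)*(q1 x))*(p x - q x)
            + x^2*(q x)^2*(p1 x - q1 x))) x := by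
  have hA := hasDerivAt_A (y := y) hq
  have h1 := ((hasDerivAt_id' (𝕜 := ℝ) x).mul hq1).mul hA
  have h2 := ((hq.const_mul 3).const_sub 1).mul hA
  have h3 := (((hasDerivAt_pow 2 x).const_mul (2*y^2)).mul (hq.pow 2)).mul (hp.sub hq)
  exact hasDerivAt_fix ((h1.sub h2).sub h3) (by simp only [Pi.mul_apply, Pi.pow_apply, Pi.sub_apply, Pi.add_apply]; push_cast; ring)

lemma hasDerivAt_F1 (hp : HasDerivAt p (p1 x) x) (hq : HasDerivAt q (q1 x) x)
    (hp1 : HasDerivAt p1 (p2 x) x) (hq1 : HasDerivAt q1 (q2 x) x)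
    (hp2 : HasDerivAt p2 a3 x) :
    HasDerivAt (fun z => p2 z * (1 - y^2*z^2*(q z)^2)
        + p1 z * (-(y^2)*(2*z*(q z)^2 + 2*z^2*(q z)*(q1 z)))
        + 2*y^2*((q z*p z + z*q1 z*p z + z*q z*p1 z)*(p z - q z)
            + z*q z*p z*(p1 z - q1 z)))
      (a3 * (1 - y^2*x^2*(q x)^2)
        + p2 x * (-(y^2)*(2*x*(q x)^2 + 2*x^2*(q x)*(q1 x)))
        + (p2 x * (-(y^2)*(2*x*(q x)^2 + 2*x^2*(q x)*(q1 x)))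
            + p1 x * (-(y^2)*(2*(q x)^2 + 8*x*(q x)*(q1 x) + 2*x^2*((q1 x)^2 + (q x)*(q2 x)))))
        + 2*y^2*(((q1 x*p x + q x*p1 x) + (q1 x*p x + x*q2 x*p x + x*q1 x*p1 x)
              + (q x*p1 x + x*q1 x*p1 x + x*q x*p2 x))*(p x - q x)
            + (q x*p x + x*q1 x*p x + x*q x*p1 x)*(p1 x - q1 x)
            + (q x*p x + x*q1 x*p x + x*q x*p1 x)*(p1 x - q1 x)
            + x*q x*p x*(p2 x - q2 x))) x := by
  have hA := hasDerivAt_A (y := y) hq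
  have hA1 : HasDerivAt (fun z => -(y^2)*(2*z*(q z)^2 + 2*z^2*(q z)*(q1 z)))
      (-(y^2)*(2*(q x)^2 + 8*x*(q x)*(q1 x) + 2*x^2*((q1 x)^2 + (q x)*(q2 x)))) x := by
    have ha := ((hasDerivAt_id' (𝕜 := ℝ) x).const_mul 2).mul (hq.pow 2)
    have hb := ((((hasDerivAt_pow 2 x).const_mul 2).mul hq).mul hq1)
    exact hasDerivAt_fix ((ha.add hb).const_mul (-(y^2))) (by simp only [Pi.mul_apply, Pi.pow_apply]; push_cast; ring)
  have t1 := hp2.mul hA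
  have t2 := hp1.mul hA1
  have hE := ((hq.mul hp).add (((hasDerivAt_id' (𝕜 := ℝ) x).mul hq1).mul hp)).add
      (((hasDerivAt_id' (𝕜 := ℝ) x).mul hq).mul hp1)
  have hzqp := ((hasDerivAt_id' (𝕜 := ℝ) x).mul hq).mul hp
  have t3 := ((hE.mul (hp.sub hq)).add (hzqp.mul (hp1.sub hq1))).const_mul (2*y^2)
  exact hasDerivAt_fix ((t1.add t2).add t3) (by simp only [Pi.mul_apply, Pi.pow_apply, Pi.sub_apply, Pi.add_apply]; ring)

lemma hasDerivAt_G1 (hp : HasDerivAt p (p1 x) x) (hq : HasDerivAt q (q1 x) x)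
    (hp1 : HasDerivAt p1 (p2 x) x) (hq1 : HasDerivAt q1 (q2 x) x)
    (hq2 : HasDerivAt q2 b3 x) :
    HasDerivAt (fun z => (q1 z + z*q2 z) * (1 - y^2*z^2*(q z)^2)
        + z*q1 z*(-(y^2)*(2*z*(q z)^2 + 2*z^2*(q z)*(q1 z)))
        - ((-(3*q1 z))*(1 - y^2*z^2*(q z)^2)
            + (1 - 3*q z)*(-(y^2)*(2*z*(q z)^2 + 2*z^2*(q z)*(q1 z))))
        - 2*y^2*((2*z*(q z)^2 + 2*z^2*(q z)*(q1 z))*(p z - q z)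
            + z^2*(q z)^2*(p1 z - q1 z)))
      ((2*q2 x + x*b3) * (1 - y^2*x^2*(q x)^2)
        + (q1 x + x*q2 x) * (-(y^2)*(2*x*(q x)^2 + 2*x^2*(q x)*(q1 x)))
        + ((q1 x + x*q2 x) * (-(y^2)*(2*x*(q x)^2 + 2*x^2*(q x)*(q1 x)))
            + x*q1 x*(-(y^2)*(2*(q x)^2 + 8*x*(q x)*(q1 x) + 2*x^2*((q1 x)^2 + (q x)*(q2 x)))))
        - ((-(3*q2 x))*(1 - y^2*x^2*(q x)^2)
            + (-(3*q1 x))*(-(y^2)*(2*x*(q x)^2 + 2*x^2*(q x)*(q1 x)))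
            + (-(3*q1 x))*(-(y^2)*(2*x*(q x)^2 + 2*x^2*(q x)*(q1 x)))
            + (1 - 3*q x)*(-(y^2)*(2*(q x)^2 + 8*x*(q x)*(q1 x) + 2*x^2*((q1 x)^2 + (q x)*(q2 x)))))
        - 2*y^2*((2*(q x)^2 + 8*x*(q x)*(q1 x) + 2*x^2*((q1 x)^2 + (q x)*(q2 x)))*(p x - q x)
            + (2*x*(q x)^2 + 2*x^2*(q x)*(q1 x))*(p1 x - q1 x)
            + (2*x*(q x)^2 + 2*x^2*(q x)*(q1 x))*(p1 x - q1 x)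
            + x^2*(q x)^2*(p2 x - q2 x))) x := by
  have hA := hasDerivAt_A (y := y) hq
  have hA1 : HasDerivAt (fun z => -(y^2)*(2*z*(q z)^2 + 2*z^2*(q z)*(q1 z)))
      (-(y^2)*(2*(q x)^2 + 8*x*(q x)*(q1 x) + 2*x^2*((q1 x)^2 + (q x)*(q2 x)))) x := by
    have ha := ((hasDerivAt_id' (𝕜 := ℝ) x).const_mul 2).mul (hq.pow 2)
    have hb := ((((hasDerivAt_pow 2 x).const_mul 2).mul hq).mul hq1)
    exact hasDerivAt_fix ((ha.add hb).const_mul (-(y^2))) (by simp only [Pi.mul_apply, Pi.pow_apply]; push_cast; ring)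
  have hK1 : HasDerivAt (fun z => 2*z*(q z)^2 + 2*z^2*(q z)*(q1 z))
      (2*(q x)^2 + 8*x*(q x)*(q1 x) + 2*x^2*((q1 x)^2 + (q x)*(q2 x))) x := by
    have ha := ((hasDerivAt_id' (𝕜 := ℝ) x).const_mul 2).mul (hq.pow 2)
    have hb := ((((hasDerivAt_pow 2 x).const_mul 2).mul hq).mul hq1)
    exact hasDerivAt_fix (ha.add hb) (by simp only [Pi.mul_apply, Pi.pow_apply]; push_cast; ring)
  have t1 := (hq1.add ((hasDerivAt_id' (𝕜 := ℝ) x).mul hq2)).mul hA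
  have t2 := (((hasDerivAt_id' (𝕜 := ℝ) x).mul hq1)).mul hA1
  have t3 := ((hq1.const_mul 3).neg.mul hA).add (((hq.const_mul 3).const_sub 1).mul hA1)
  have t4 := ((hK1.mul (hp.sub hq)).add (((hasDerivAt_pow 2 x).mul (hq.pow 2)).mul
      (hp1.sub hq1))).const_mul (2*y^2)
  exact hasDerivAt_fix (((t1.add t2).sub t3).sub t4) (by simp only [Pi.mul_apply, Pi.pow_apply, Pi.sub_apply, Pi.add_apply, Pi.neg_apply]; push_cast; ring)

end sys

/-- The Larson–Penston conditions at the sonic point `z = 1`. -/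
def LPConds (y : ℝ) (ρ ω : ℝ → ℝ) : Prop :=
  ρ 1 = 1 / y ∧ ω 1 = 1 / y ∧ deriv ρ 1 = -(1 / y) ∧ deriv ω 1 = 1 - 2 / y

set_option maxHeartbeats 1600000 in
/-- Initialisation: qualitative properties of the LP-type solution just to the right
of the sonic point `z = 1`. -/
theorem initialisation_right_of_sonic_point
    (y : ℝ) (hy : y ∈ Set.Icc (2 : ℝ) 3)
    (r : ℝ) (hr : r ∈ Set.Ioo (0 : ℝ) 1)
    (ρ ω : ℝ → ℝ)
    (hρa : AnalyticOnNhd ℝ ρ (Set.Ioo (1 - r) (1 + r)))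
    (hωa : AnalyticOnNhd ℝ ω (Set.Ioo (1 - r) (1 + r)))
    (hsol : ∀ z ∈ Set.Ioo (1 - r) (1 + r), MultSys y ρ ω z)
    (hlp : LPConds y ρ ω) :
    ∃ δ : ℝ, 0 < δ ∧ δ < r ∧ ∀ z ∈ Set.Ioo (1 : ℝ) (1 + δ),
      deriv ρ z < 0 ∧
      0 < deriv ω z ∧
      (1 / 3 < ω z ∧ ω z < 1) ∧
      (-2 * ρ z / z < deriv ρ z ∧ deriv ρ z < -(ρ z) / z) ∧
      1 / (y * z) < ω z ∧
      ρ z < 1 / (y * z) ∧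
      1 / (y * z) ^ 2 < ρ z * ω z := by
  obtain ⟨hy2, hy3⟩ := hy
  obtain ⟨hr0, hr1⟩ := hr
  have hy0 : (0:ℝ) < y := by linarith
  have hSo : IsOpen (Set.Ioo (1-r) (1+r)) := isOpen_Ioo
  have h1S : (1:ℝ) ∈ Set.Ioo (1-r) (1+r) := ⟨by linarith, by linarith⟩
  obtain ⟨hρ1, hω1, hdρ1, hdω1⟩ := hlp
  have hρd := hρa.deriv
  have hρdd := hρd.deriv
  have hωd := hωa.deriv
  have hωdd := hωd.deriv
  have hp : ∀ z ∈ Set.Ioo (1-r) (1+r), HasDerivAt ρ (deriv ρ z) z :=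
    fun z hz => (hρa z hz).differentiableAt.hasDerivAt
  have hq : ∀ z ∈ Set.Ioo (1-r) (1+r), HasDerivAt ω (deriv ω z) z :=
    fun z hz => (hωa z hz).differentiableAt.hasDerivAt
  have hp1 : ∀ z ∈ Set.Ioo (1-r) (1+r), HasDerivAt (deriv ρ) (deriv (deriv ρ) z) z :=
    fun z hz => (hρd z hz).differentiableAt.hasDerivAt
  have hq1 : ∀ z ∈ Set.Ioo (1-r) (1+r), HasDerivAt (deriv ω) (deriv (deriv ω) z) z :=
    fun z hz => (hωd z hz).differentiableAt.hasDerivAt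
  have hp2 : ∀ z ∈ Set.Ioo (1-r) (1+r), HasDerivAt (deriv (deriv ρ)) (deriv (deriv (deriv ρ)) z) z :=
    fun z hz => (hρdd z hz).differentiableAt.hasDerivAt
  have hq2 : ∀ z ∈ Set.Ioo (1-r) (1+r), HasDerivAt (deriv (deriv ω)) (deriv (deriv (deriv ω)) z) z :=
    fun z hz => (hωdd z hz).differentiableAt.hasDerivAt
  -- second-derivative identities at the sonic point
  have hF0 : ∀ z ∈ Set.Ioo (1-r) (1+r),
      (fun z => deriv ρ z * (1 - y^2*z^2*(ω z)^2) + 2*y^2*z*ω z*ρ z*(ρ z - ω z)) z = 0 :=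
    fun z hz => (hsol z hz).1
  have hDF := deriv_eq_zero_on hSo hF0
  have hF1zero : ∀ z ∈ Set.Ioo (1-r) (1+r),
      (fun z => deriv (deriv ρ) z * (1 - y^2*z^2*(ω z)^2)
        + deriv ρ z * (-(y^2)*(2*z*(ω z)^2 + 2*z^2*(ω z)*(deriv ω z)))
        + 2*y^2*((ω z*ρ z + z*deriv ω z*ρ z + z*ω z*deriv ρ z)*(ρ z - ω z)
            + z*ω z*ρ z*(deriv ρ z - deriv ω z))) z = 0 := by
    intro z hz
    have h := (hasDerivAt_F (y := y) (hp z hz) (hq z hz) (hp1 z hz)).deriv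
    exact h.symm.trans (hDF z hz)
  have eqF := ((hasDerivAt_F1 (y := y) (hp 1 h1S) (hq 1 h1S) (hp1 1 h1S) (hq1 1 h1S)
      (hp2 1 h1S)).deriv).symm.trans (deriv_eq_zero_on hSo hF1zero 1 h1S)
  have hG0 : ∀ z ∈ Set.Ioo (1-r) (1+r),
      (fun z => z * deriv ω z * (1 - y^2*z^2*(ω z)^2)
        - (1 - 3*ω z) * (1 - y^2*z^2*(ω z)^2) - 2*y^2*z^2*(ω z)^2*(ρ z - ω z)) z = 0 :=
    fun z hz => (hsol z hz).2
  have hDG := deriv_eq_zero_on hSo hG0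
  have hG1zero : ∀ z ∈ Set.Ioo (1-r) (1+r),
      (fun z => (deriv ω z + z*deriv (deriv ω) z) * (1 - y^2*z^2*(ω z)^2)
        + z*deriv ω z*(-(y^2)*(2*z*(ω z)^2 + 2*z^2*(ω z)*(deriv ω z)))
        - ((-(3*deriv ω z))*(1 - y^2*z^2*(ω z)^2)
            + (1 - 3*ω z)*(-(y^2)*(2*z*(ω z)^2 + 2*z^2*(ω z)*(deriv ω z))))
        - 2*y^2*((2*z*(ω z)^2 + 2*z^2*(ω z)*(deriv ω z))*(ρ z - ω z)
            + z^2*(ω z)^2*(deriv ρ z - deriv ω z))) z = 0 := by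
    intro z hz
    have h := (hasDerivAt_G (y := y) (hp z hz) (hq z hz) (hq1 z hz)).deriv
    exact h.symm.trans (hDG z hz)
  have eqG := ((hasDerivAt_G1 (y := y) (hp 1 h1S) (hq 1 h1S) (hp1 1 h1S) (hq1 1 h1S)
      (hq2 1 h1S)).deriv).symm.trans (deriv_eq_zero_on hSo hG1zero 1 h1S)
  rw [hρ1, hω1, hdρ1, hdω1] at eqF eqG
  have hA0 : 1 - y ^ 2 * 1 ^ 2 * (1 / y) ^ 2 = 0 := by
    rw [one_pow, mul_one, div_pow, one_pow, mul_one_div, div_self (pow_ne_zero 2 hy0.ne'), sub_self]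
  rw [hA0, mul_zero] at eqF eqG
  set a := deriv (deriv ρ) 1 with ha
  set b := deriv (deriv ω) 1 with hb
  field_simp at eqF eqG
  ring_nf at eqF eqG
  -- eqF : a * y ^ 21 * 6 + (-(a * y ^ 22 * 4) - y ^ 20 * 14) + (y ^ 21 * 12 - y ^ 22 * 2) = 0
  -- eqG : -(a * y ^ 38 * 2) - y ^ 37 * 18 + y ^ 38 * 32 + y ^ 38 * b * 4
  --        + (-(y ^ 39 * 10) - y ^ 39 * b * 4) = 0
  have e1 : y^20 * ((6*y - 4*y^2)*a - (2*y^2 - 12*y + 14)) = y^20 * 0 := by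
    rw [mul_zero]; linear_combination y^20 * eqF
  have eqF' := mul_left_cancel₀ (pow_ne_zero 20 hy0.ne') e1
  have e2 : y^37 * ((-2)*a*y - 18 + 32*y + 4*b*y - 10*y^2 - 4*b*y^2) = y^37 * 0 := by
    rw [mul_zero]; linear_combination y^37 * eqG
  have eqG' := mul_left_cancel₀ (pow_ne_zero 37 hy0.ne') e2
  have key1 : a * y < 2 := by
    nlinarith [eqF', sq_nonneg (y-1), sq_nonneg (y-2), hy2, hy3]
  have key1' : a < 2/y := (lt_div_iff₀ hy0).mpr key1
  have key2 : y = 2 → 0 < b := by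
    intro h; rw [h] at eqF' eqG'; norm_num at eqF' eqG'; linarith
  -- eventual sign statements to the right of z = 1
  have ev1 : ∀ᶠ z in 𝓝[>] (1:ℝ), deriv ρ z < 0 := by
    have h := ev_pos_cont (g := fun z => -(deriv ρ z)) ((hρd 1 h1S).continuousAt.neg)
      (by beta_reduce; rw [hdρ1, neg_neg]; positivity)
    filter_upwards [h] with z hz; linarith
  have ev2 : ∀ᶠ z in 𝓝[>] (1:ℝ), 0 < deriv ω z := by
    rcases lt_or_eq_of_le hy2 with h2y | h2y
    · refine ev_pos_cont (hωd 1 h1S).continuousAt ?_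
      rw [hdω1]
      have : 2/y < 1 := (div_lt_one hy0).mpr h2y
      linarith
    · refine ev_pos_right (hq1 1 h1S) ?_ (key2 h2y.symm)
      rw [hdω1, ← h2y]; norm_num
  have ev3a : ∀ᶠ z in 𝓝[>] (1:ℝ), 0 < ω z - 1/3 := by
    rcases lt_or_eq_of_le hy3 with h3y | h3y
    · refine ev_pos_cont (g := fun z => ω z - 1/3)
        ((hωa 1 h1S).continuousAt.sub continuousAt_const) ?_
      beta_reduce; rw [hω1, sub_pos, one_div, one_div]
      exact inv_strictAnti₀ hy0 h3y
    · refine ev_pos_right (g := fun z => ω z - 1/3) ((hq 1 h1S).sub_const (1/3)) ?_ ?_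
      · beta_reduce; rw [hω1, h3y]; norm_num
      · rw [hdω1, h3y]; norm_num
  have ev3b : ∀ᶠ z in 𝓝[>] (1:ℝ), 0 < 1 - ω z := by
    refine ev_pos_cont (g := fun z => 1 - ω z)
      (continuousAt_const.sub (hωa 1 h1S).continuousAt) ?_
    beta_reduce; rw [hω1]
    have : 1/y ≤ 1/2 := one_div_le_one_div_of_le (by norm_num) hy2
    linarith
  have ev4a : ∀ᶠ z in 𝓝[>] (1:ℝ), 0 < deriv ρ z + 2*ρ z/z := by
    refine ev_pos_cont (g := fun z => deriv ρ z + 2*ρ z/z)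
      ((hρd 1 h1S).continuousAt.add
        (ContinuousAt.div ((hρa 1 h1S).continuousAt.const_mul 2) continuousAt_id one_ne_zero)) ?_
    beta_reduce; rw [hdρ1, hρ1]
    have : -(1/y) + 2*(1/y)/1 = 1/y := by ring
    rw [this]; positivity
  have ev4b : ∀ᶠ z in 𝓝[>] (1:ℝ), deriv ρ z + ρ z/z < 0 := by
    have hd : HasDerivAt (fun z => deriv ρ z + ρ z/z) (a - 2/y) 1 := by
      have h := (hp1 1 h1S).add ((hp 1 h1S).div (hasDerivAt_id' (𝕜 := ℝ) 1) one_ne_zero)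
      refine hasDerivAt_fix h ?_
      rw [hdρ1, hρ1, ← ha]; ring
    refine ev_neg_right hd ?_ (by linarith)
    beta_reduce; rw [hdρ1, hρ1]; ring
  have ev5 : ∀ᶠ z in 𝓝[>] (1:ℝ), 0 < ω z - 1/(y*z) := by
    have hd : HasDerivAt (fun z => ω z - 1/(y*z)) (1 - 1/y) 1 := by
      have h := (hq 1 h1S).sub ((hasDerivAt_const 1 (1:ℝ)).div
        ((hasDerivAt_id' (𝕜 := ℝ) 1).const_mul y) (by simpa using hy0.ne'))
      refine hasDerivAt_fix h ?_
      rw [hdω1]; field_simp; ring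
    refine ev_pos_right hd ?_ ?_
    · beta_reduce; rw [hω1]; norm_num
    · have : 1/y ≤ 1/2 := one_div_le_one_div_of_le (by norm_num) hy2
      linarith
  have ev7 : ∀ᶠ z in 𝓝[>] (1:ℝ), 0 < ρ z * ω z - 1/(y*z)^2 := by
    have hne : ((y*(1:ℝ))^2 : ℝ) ≠ 0 := by
      simp only [mul_one]; positivity
    have hd : HasDerivAt (fun z => ρ z * ω z - 1/(y*z)^2) ((y-1)/y^2) 1 := by
      have h := ((hp 1 h1S).mul (hq 1 h1S)).sub ((hasDerivAt_const 1 (1:ℝ)).div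
        (((hasDerivAt_id' (𝕜 := ℝ) 1).const_mul y).pow 2) hne)
      refine hasDerivAt_fix h ?_
      rw [hdρ1, hρ1, hω1, hdω1]; simp only [Pi.pow_apply]; field_simp; ring
    refine ev_pos_right hd ?_ ?_
    · beta_reduce; rw [hρ1, hω1]; field_simp; ring
    · exact div_pos (by linarith) (by positivity)
  -- the second-order claim ρ < 1/(yz), via the mean value theorem
  have hf' : ∀ z ∈ Set.Ioo (1-r) (1+r), (0:ℝ) < z →
      HasDerivAt (fun z => 1/(y*z) - ρ z) (-(y/(y*z)^2) - deriv ρ z) z := by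
    intro z hz hz0
    have h := ((hasDerivAt_const z (1:ℝ)).div
      ((hasDerivAt_id' (𝕜 := ℝ) z).const_mul y) (mul_ne_zero hy0.ne' hz0.ne')).sub (hp z hz)
    exact hasDerivAt_fix h (by ring)
  have hf1d : HasDerivAt (fun z => -(y/(y*z)^2) - deriv ρ z) (2/y - a) 1 := by
    have hne : ((y*(1:ℝ))^2 : ℝ) ≠ 0 := by simp only [mul_one]; positivity
    have h := (((hasDerivAt_const 1 (y:ℝ)).div
      (((hasDerivAt_id' (𝕜 := ℝ) 1).const_mul y).pow 2) hne).neg).sub (hp1 1 h1S)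
    refine hasDerivAt_fix h ?_
    rw [← ha]; simp only [Pi.pow_apply]; field_simp; ring
  have hf10 : (fun z => -(y/(y*z)^2) - deriv ρ z) 1 = 0 := by
    beta_reduce; rw [hdρ1]; field_simp; ring
  have evf1 := ev_pos_right hf1d hf10 (by linarith)
  have evS : ∀ᶠ z in 𝓝[>] (1:ℝ), z ∈ Set.Ioo (1-r) (1+r) :=
    Filter.eventually_of_mem (nhdsWithin_le_nhds (hSo.mem_nhds h1S)) (fun _ h => h)
  obtain ⟨u, hu, hsub⟩ := mem_nhdsGT_iff_exists_Ioo_subset.mp (evf1.and evS)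
  have hu1 : (1:ℝ) < u := hu
  have hf6 : ∀ z ∈ Set.Ioo (1:ℝ) u, 0 < 1/(y*z) - ρ z := by
    intro z hz
    have h1z : (1:ℝ) < z := hz.1
    have hzu : z < u := hz.2
    have hIcc : Set.Icc (1:ℝ) z ⊆ Set.Ioo (1-r) (1+r) := by
      intro w hw
      rcases eq_or_lt_of_le hw.1 with h | h
      · rw [← h]; exact h1S
      · exact (hsub ⟨h, lt_of_le_of_lt hw.2 hzu⟩).2
    have hcont : ContinuousOn (fun z => 1/(y*z) - ρ z) (Set.Icc 1 z) := by
      intro w hw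
      have hw0 : (0:ℝ) < w := by have := hw.1; linarith
      exact (ContinuousAt.continuousWithinAt
        ((continuousAt_const.div ((continuous_const.mul continuous_id).continuousAt)
          (mul_ne_zero hy0.ne' hw0.ne')).sub (hρa w (hIcc hw)).continuousAt))
    have hderiv : ∀ w ∈ Set.Ioo (1:ℝ) z, HasDerivAt (fun z => 1/(y*z) - ρ z)
        (-(y/(y*w)^2) - deriv ρ w) w :=
      fun w hw => hf' w (hIcc ⟨le_of_lt hw.1, le_of_lt hw.2⟩) (by linarith [hw.1])
    obtain ⟨c, hc, hceq⟩ := exists_hasDerivAt_eq_slope (fun z => 1/(y*z) - ρ z)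
      (fun w => -(y/(y*w)^2) - deriv ρ w) h1z hcont hderiv
    have hcpos : 0 < -(y/(y*c)^2) - deriv ρ c := (hsub ⟨hc.1, lt_trans hc.2 hzu⟩).1
    rw [hceq] at hcpos
    beta_reduce at hcpos
    have hval1 : 1/(y*(1:ℝ)) - ρ 1 = 0 := by rw [hρ1]; norm_num
    rw [hval1, sub_zero] at hcpos
    rcases div_pos_iff.mp hcpos with ⟨h,_⟩ | ⟨_,h⟩
    · exact h
    · linarith
  have ev6 : ∀ᶠ z in 𝓝[>] (1:ℝ), 0 < 1/(y*z) - ρ z :=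
    Filter.eventually_of_mem (Ioo_mem_nhdsGT_of_mem ⟨le_refl 1, hu1⟩) hf6
  -- assemble
  have BIG := ev1.and (ev2.and (ev3a.and (ev3b.and (ev4a.and (ev4b.and (ev5.and
      (ev6.and ev7)))))))
  obtain ⟨u', hu', hsub'⟩ := mem_nhdsGT_iff_exists_Ioo_subset.mp BIG
  have hu'1 : (1:ℝ) < u' := hu'
  refine ⟨min (u' - 1) (r/2), lt_min (by linarith) (by linarith),
    lt_of_le_of_lt (min_le_right _ _) (by linarith), ?_⟩
  intro z hz
  have hz1 : 1 < z := hz.1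
  have hzu : z < u' := by
    have h2 := hz.2
    have h3 := min_le_left (u'-1) (r/2)
    linarith
  obtain ⟨e1', e2', e3a', e3b', e4a', e4b', e5', e6', e7'⟩ := hsub' ⟨hz1, hzu⟩
  have hz0 : (0:ℝ) < z := by linarith
  refine ⟨e1', e2', ⟨by linarith, by linarith⟩, ⟨?_, ?_⟩, by linarith, by linarith, by linarith⟩
  · have hh : -2 * ρ z / z = -(2*ρ z/z) := by ring
    rw [hh]; linarith
  · have hh : -(ρ z) / z = -(ρ z/z) := by ring
    rw [hh]; linarith
end
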